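/- For every r ≥ 0, the polynomial c_r(x|y) = Σ_{i=0}^{min(r,m)} (−1)^{r−i} σ_i(x_1,…,x_m) p_{r−i}(y_1,…,y_n) is supersymmetric, i.e. c_r ∈ A_s. -/

import Mathlib

/-- The substitution `x₁ = t`, `y₁ = t` into a polynomial in the variables
`x₁, …, x_m, y₁, …, y_n`, viewed as a polynomial in `t` (the remaining variables being
constants). -/
noncomputable def substT (K : Type*) [CommSemiring K] (m n : ℕ)
    (f : MvPolynomial (Fin m ⊕ Fin n) K) : Polynomial (MvPolynomial (Fin m ⊕ Fin n) K) :=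
  MvPolynomial.aeval (fun i : Fin m ⊕ Fin n =>
    match i with
    | Sum.inl a => if (a : ℕ) = 0
        then (Polynomial.X : Polynomial (MvPolynomial (Fin m ⊕ Fin n) K))
        else Polynomial.C (MvPolynomial.X (Sum.inl a))
    | Sum.inr b => if (b : ℕ) = 0
        then (Polynomial.X : Polynomial (MvPolynomial (Fin m ⊕ Fin n) K))
        else Polynomial.C (MvPolynomial.X (Sum.inr b))) f

/-- A polynomial in `x₁, …, x_m, y₁, …, y_n` is supersymmetric if it is symmetric in the
`x` variables and in the `y` variables separately, and the derivative with respect to `t`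
of the polynomial obtained by substituting `x₁ = t`, `y₁ = t` vanishes. -/
def IsSuperSym (K : Type*) [CommSemiring K] (m n : ℕ)
    (f : MvPolynomial (Fin m ⊕ Fin n) K) : Prop :=
  (∀ σ : Equiv.Perm (Fin m),
      MvPolynomial.rename (Equiv.sumCongr σ (Equiv.refl (Fin n))) f = f) ∧
    (∀ τ : Equiv.Perm (Fin n),
      MvPolynomial.rename (Equiv.sumCongr (Equiv.refl (Fin m)) τ) f = f) ∧
    Polynomial.derivative (substT K m n f) = 0

/-- The polynomial `c_r(x|y) = Σ_{i=0}^{min(r,m)} (−1)^{r−i} σ_i(x) p_{r−i}(y)`, where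
`σ_i` is the `i`-th elementary symmetric polynomial and `p_j` the `j`-th complete
homogeneous symmetric polynomial. -/
noncomputable def cPoly (K : Type*) [CommRing K] (m n : ℕ) (r : ℕ) :
    MvPolynomial (Fin m ⊕ Fin n) K :=
  ∑ i ∈ Finset.range (min r m + 1),
    (-1 : MvPolynomial (Fin m ⊕ Fin n) K) ^ (r - i) *
      (MvPolynomial.rename Sum.inl (MvPolynomial.esymm (Fin m) K i) *
        MvPolynomial.rename Sum.inr (MvPolynomial.hsymm (Fin n) K (r - i)))

section Aux

open MvPolynomial Finset

variable {K : Type*} [CommRing K]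

/-- Substitute `0` for the variable `z`. -/
noncomputable def sub0 {σ : Type*} [CommSemiring K] (z : σ) [DecidableEq σ] :
    MvPolynomial σ K →ₐ[K] MvPolynomial σ K :=
  aeval (fun a => if a = z then 0 else X a)

lemma sub0_esymm {σ : Type*} [Fintype σ] [DecidableEq σ] (z : σ) (j : ℕ) :
    sub0 (K := K) z (esymm σ K j) =
      ∑ t ∈ powersetCard j (univ.erase z), ∏ a ∈ t, X a := by
  rw [esymm, map_sum,
    ← Finset.sum_filter_add_sum_filter_not (powersetCard j univ) (fun t => z ∈ t)]
  have h1 : ∀ t ∈ (powersetCard j univ).filter (fun t => z ∈ t),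
      sub0 (K := K) z (∏ a ∈ t, X a) = 0 := by
    intro t ht
    rw [map_prod]
    exact Finset.prod_eq_zero (Finset.mem_filter.mp ht).2 (by simp [sub0])
  rw [Finset.sum_congr rfl h1, Finset.sum_const_zero, zero_add]
  have h2 : (powersetCard j univ).filter (fun t => z ∉ t)
      = powersetCard j (univ.erase z) := by
    ext t
    simp only [Finset.mem_filter, Finset.mem_powersetCard, Finset.subset_erase,
      Finset.subset_univ, true_and, and_comm]
  rw [h2]
  refine Finset.sum_congr rfl fun t ht => ?_
  rw [map_prod]
  refine Finset.prod_congr rfl fun a ha => ?_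
  have haz : a ≠ z := by
    have := (Finset.mem_powersetCard.mp ht).1
    rw [Finset.subset_erase] at this
    intro h; exact this.2 (h ▸ ha)
  simp [sub0, haz]

lemma esymm_rec {σ : Type*} [Fintype σ] [DecidableEq σ] (z : σ) (i : ℕ) :
    esymm σ K (i + 1) =
      X z * sub0 (K := K) z (esymm σ K i) + sub0 (K := K) z (esymm σ K (i + 1)) := by
  rw [sub0_esymm, sub0_esymm]
  have hins : (univ : Finset σ) = insert z (univ.erase z) :=
    (Finset.insert_erase (Finset.mem_univ z)).symm
  have hdisj : Disjoint (powersetCard (i + 1) (univ.erase z))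
      ((powersetCard i (univ.erase z)).image (insert z)) := by
    rw [Finset.disjoint_left]
    intro t ht ht'
    obtain ⟨u, hu, rfl⟩ := Finset.mem_image.mp ht'
    have := (Finset.mem_powersetCard.mp ht).1
    rw [Finset.subset_erase] at this
    exact this.2 (Finset.mem_insert_self z u)
  have hzt : ∀ t ∈ powersetCard i (univ.erase z), z ∉ t := by
    intro t ht h
    have := (Finset.mem_powersetCard.mp ht).1
    rw [Finset.subset_erase] at this
    exact this.2 h
  calc esymm σ K (i + 1)
      = ∑ t ∈ powersetCard (i + 1) (univ.erase z) ∪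
          (powersetCard i (univ.erase z)).image (insert z), ∏ a ∈ t, X a := by
        rw [esymm]
        conv_lhs => rw [hins]
        rw [Finset.powersetCard_succ_insert (Finset.notMem_erase z univ)]
    _ = (∑ t ∈ powersetCard (i + 1) (univ.erase z), ∏ a ∈ t, X a) +
          ∑ t ∈ (powersetCard i (univ.erase z)).image (insert z), ∏ a ∈ t, X a := by
        rw [Finset.sum_union hdisj]
    _ = _ := by
        rw [add_comm]
        congr 1
        rw [Finset.sum_image (by
          intro a ha b hb hab
          have hza := hzt a ha
          have hzb := hzt b hb
          rw [← Finset.erase_insert hza, ← Finset.erase_insert hzb, hab]), Finset.mul_sum]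
        exact Finset.sum_congr rfl fun t ht => Finset.prod_insert (hzt t ht)

lemma sub0_hsymm {σ : Type*} [Fintype σ] [DecidableEq σ] (z : σ) (j : ℕ) :
    sub0 (K := K) z (hsymm σ K j) =
      ∑ s ∈ (univ : Finset (Sym σ j)).filter (fun s => z ∉ s),
        (s.1.map (X (R := K))).prod := by
  rw [hsymm, map_sum,
    ← Finset.sum_filter_add_sum_filter_not (univ : Finset (Sym σ j)) (fun s => z ∈ s)]
  have h1 : ∀ s ∈ (univ : Finset (Sym σ j)).filter (fun s => z ∈ s),
      sub0 (K := K) z ((s.1.map X).prod) = 0 := by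
    intro s hs
    rw [map_multiset_prod, Multiset.map_map]
    refine Multiset.prod_eq_zero ?_
    refine Multiset.mem_map.mpr ⟨z, ?_, by simp [sub0]⟩
    simpa using (Finset.mem_filter.mp hs).2
  rw [Finset.sum_congr rfl h1, Finset.sum_const_zero, zero_add]
  refine Finset.sum_congr rfl fun s hs => ?_
  rw [map_multiset_prod, Multiset.map_map]
  congr 1
  refine Multiset.map_congr rfl fun a ha => ?_
  have : a ≠ z := by
    intro h
    exact (Finset.mem_filter.mp hs).2 (by simpa [h] using ha)
  simp [sub0, this]

lemma hsymm_rec {σ : Type*} [Fintype σ] [DecidableEq σ] (z : σ) (j : ℕ) :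
    hsymm σ K (j + 1) =
      X z * hsymm σ K j + sub0 (K := K) z (hsymm σ K (j + 1)) := by
  rw [sub0_hsymm]
  conv_lhs => rw [hsymm]
  rw [← Finset.sum_filter_add_sum_filter_not (univ : Finset (Sym σ (j+1))) (fun s => z ∈ s)]
  congr 1
  rw [hsymm, Finset.mul_sum]
  refine Finset.sum_bij' (fun s hs => Sym.erase s z (by simpa using (Finset.mem_filter.mp hs).2))
    (fun t _ => z ::ₛ t) (fun s hs => Finset.mem_univ _)
    (fun t ht => Finset.mem_filter.mpr ⟨Finset.mem_univ _, Sym.mem_cons_self z t⟩)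
    (fun s hs => Sym.cons_erase _) (fun t ht => Sym.erase_cons_head t z) ?_
  intro s hs
  have hz : z ∈ s.1 := Sym.mem_coe.mpr ((Finset.mem_filter.mp hs).2)
  conv_lhs => rw [← Multiset.cons_erase hz]
  simp [Sym.erase]

end Aux


section Main

open MvPolynomial Finset

noncomputable def gT (K : Type*) [CommSemiring K] (m n : ℕ) :
    Fin m ⊕ Fin n → Polynomial (MvPolynomial (Fin m ⊕ Fin n) K) := fun i =>
  match i with
  | Sum.inl a => if (a : ℕ) = 0
      then (Polynomial.X : Polynomial (MvPolynomial (Fin m ⊕ Fin n) K))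
      else Polynomial.C (MvPolynomial.X (Sum.inl a))
  | Sum.inr b => if (b : ℕ) = 0
      then (Polynomial.X : Polynomial (MvPolynomial (Fin m ⊕ Fin n) K))
      else Polynomial.C (MvPolynomial.X (Sum.inr b))

lemma substT_eq (K : Type*) [CommSemiring K] (m n : ℕ) (f : MvPolynomial (Fin m ⊕ Fin n) K) :
    substT K m n f = MvPolynomial.aeval (gT K m n) f := rfl

noncomputable def EE (K : Type*) [CommRing K] (m n : ℕ) (i : ℕ) :
    MvPolynomial (Fin m ⊕ Fin n) K :=
  aeval (fun a : Fin m => if (a : ℕ) = 0 then 0 else X (Sum.inl a)) (esymm (Fin m) K i)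

noncomputable def HH (K : Type*) [CommRing K] (m n : ℕ) (j : ℕ) :
    MvPolynomial (Fin m ⊕ Fin n) K :=
  aeval (fun b : Fin n => if (b : ℕ) = 0 then 0 else X (Sum.inr b)) (hsymm (Fin n) K j)

lemma EE_zero (K : Type*) [CommRing K] (m n : ℕ) : EE K m n 0 = 1 := by
  simp [EE]

lemma Q_zero (K : Type*) [CommRing K] (m n : ℕ) :
    aeval (gT K m n ∘ Sum.inr) (hsymm (Fin n) K 0) = 1 := by
  simp [hsymm_zero]

lemma EE_card (K : Type*) [CommRing K] (m n : ℕ) (hm : 0 < m) : EE K m n m = 0 := by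
  rw [EE, esymm, map_sum]
  refine Finset.sum_eq_zero fun t ht => ?_
  have htu : t = univ := Finset.eq_univ_of_card t
    (by rw [(Finset.mem_powersetCard.mp ht).2, Fintype.card_fin])
  rw [map_prod]
  exact Finset.prod_eq_zero (htu ▸ Finset.mem_univ (⟨0, hm⟩ : Fin m)) (by simp)

lemma aeval_g_sub0_x (K : Type*) [CommRing K] (m n : ℕ) (hm : 0 < m)
    (p : MvPolynomial (Fin m) K) :
    aeval (gT K m n ∘ Sum.inl) (sub0 (K := K) (⟨0, hm⟩ : Fin m) p)
      = Polynomial.C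
          (aeval (fun a : Fin m => if (a : ℕ) = 0 then 0 else X (Sum.inl a)) p) := by
  have h : (aeval (gT K m n ∘ Sum.inl)).comp (sub0 (K := K) (⟨0, hm⟩ : Fin m))
      = (Polynomial.CAlgHom (R := K)).comp
        (aeval (fun a : Fin m => if (a : ℕ) = 0 then 0 else X (Sum.inl a))) := by
    apply MvPolynomial.algHom_ext
    intro a
    simp only [AlgHom.comp_apply, sub0, aeval_X]
    by_cases h : (a : ℕ) = 0
    · have ha : a = ⟨0, hm⟩ := Fin.ext h
      simp [ha, Polynomial.CAlgHom]
    · have ha : a ≠ ⟨0, hm⟩ := fun hh => h (by simp [hh])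
      simp [ha, h, gT, Polynomial.CAlgHom]
  exact DFunLike.congr_fun h p

lemma aeval_g_sub0_y (K : Type*) [CommRing K] (m n : ℕ) (hn : 0 < n)
    (p : MvPolynomial (Fin n) K) :
    aeval (gT K m n ∘ Sum.inr) (sub0 (K := K) (⟨0, hn⟩ : Fin n) p)
      = Polynomial.C
          (aeval (fun b : Fin n => if (b : ℕ) = 0 then 0 else X (Sum.inr b)) p) := by
  have h : (aeval (gT K m n ∘ Sum.inr)).comp (sub0 (K := K) (⟨0, hn⟩ : Fin n))
      = (Polynomial.CAlgHom (R := K)).comp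
        (aeval (fun b : Fin n => if (b : ℕ) = 0 then 0 else X (Sum.inr b))) := by
    apply MvPolynomial.algHom_ext
    intro b
    simp only [AlgHom.comp_apply, sub0, aeval_X]
    by_cases h : (b : ℕ) = 0
    · have hb : b = ⟨0, hn⟩ := Fin.ext h
      simp [hb, Polynomial.CAlgHom]
    · have hb : b ≠ ⟨0, hn⟩ := fun hh => h (by simp [hh])
      simp [hb, h, gT, Polynomial.CAlgHom]
  exact DFunLike.congr_fun h p

lemma aeval_g_esymm_succ (K : Type*) [CommRing K] (m n : ℕ) (hm : 0 < m) (i : ℕ) :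
    aeval (gT K m n ∘ Sum.inl) (esymm (Fin m) K (i + 1))
      = Polynomial.X * Polynomial.C (EE K m n i) + Polynomial.C (EE K m n (i + 1)) := by
  conv_lhs => rw [esymm_rec (⟨0, hm⟩ : Fin m) i]
  rw [map_add, map_mul, aeval_X, aeval_g_sub0_x K m n hm, aeval_g_sub0_x K m n hm]
  rw [show (gT K m n ∘ Sum.inl) (⟨0, hm⟩ : Fin m) = Polynomial.X by simp [gT]]
  rfl

lemma aeval_g_hsymm_succ (K : Type*) [CommRing K] (m n : ℕ) (hn : 0 < n) (j : ℕ) :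
    aeval (gT K m n ∘ Sum.inr) (hsymm (Fin n) K (j + 1))
      = Polynomial.X * aeval (gT K m n ∘ Sum.inr) (hsymm (Fin n) K j)
        + Polynomial.C (HH K m n (j + 1)) := by
  conv_lhs => rw [hsymm_rec (⟨0, hn⟩ : Fin n) j]
  rw [map_add, map_mul, aeval_X, aeval_g_sub0_y K m n hn]
  rw [show (gT K m n ∘ Sum.inr) (⟨0, hn⟩ : Fin n) = Polynomial.X by simp [gT]]
  rfl

/-- For every `r ≥ 0`, the polynomial `c_r` is supersymmetric. -/
theorem cPoly_isSuperSym (K : Type*) [Field K] (m n : ℕ) (hm : 1 ≤ m) (hn : 1 ≤ n)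
    (r : ℕ) : IsSuperSym K m n (cPoly K m n r) := by
  refine ⟨?_, ?_, ?_⟩
  · intro σ
    unfold cPoly
    rw [map_sum]
    refine Finset.sum_congr rfl fun i _ => ?_
    rw [map_mul, map_mul, map_pow, map_neg, map_one]
    congr 2
    · rw [rename_rename,
        show (⇑(Equiv.sumCongr σ (Equiv.refl (Fin n)))) ∘ Sum.inl = Sum.inl ∘ ⇑σ by
          funext a; simp,
        ← rename_rename, esymm_isSymmetric (Fin m) K i σ]
    · rw [rename_rename,
        show (⇑(Equiv.sumCongr σ (Equiv.refl (Fin n)))) ∘ Sum.inr = Sum.inr by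
          funext b; simp]
  · intro τ
    unfold cPoly
    rw [map_sum]
    refine Finset.sum_congr rfl fun i _ => ?_
    rw [map_mul, map_mul, map_pow, map_neg, map_one]
    congr 2
    · rw [rename_rename,
        show (⇑(Equiv.sumCongr (Equiv.refl (Fin m)) τ)) ∘ Sum.inl = Sum.inl by
          funext a; simp]
    · rw [rename_rename,
        show (⇑(Equiv.sumCongr (Equiv.refl (Fin m)) τ)) ∘ Sum.inr = Sum.inr ∘ ⇑τ by
          funext b; simp,
        ← rename_rename, hsymm_isSymmetric (Fin n) K (r - i) τ]
  · set B := MvPolynomial (Fin m ⊕ Fin n) K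
    set M := min r m with hMdef
    set Q : ℕ → Polynomial B := fun j => aeval (gT K m n ∘ Sum.inr) (hsymm (Fin n) K j)
      with hQdef
    set F : ℕ → Polynomial B :=
      fun i => (-1) ^ (r - i) * Polynomial.C (EE K m n i) * Q (r - i) with hFdef
    have hQ0 : Q 0 = 1 := Q_zero K m n
    have hsub : substT K m n (cPoly K m n r)
        = ∑ i ∈ range (M + 1), (-1 : Polynomial B) ^ (r - i) *
            (aeval (gT K m n ∘ Sum.inl) (esymm (Fin m) K i) * Q (r - i)) := by
      rw [substT_eq]
      simp only [cPoly, map_sum, map_mul, map_pow, map_neg, map_one, aeval_rename]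
      rfl
    have hstep : ∀ i ∈ range M,
        (-1 : Polynomial B) ^ (r - (i + 1)) *
            (aeval (gT K m n ∘ Sum.inl) (esymm (Fin m) K (i + 1)) * Q (r - (i + 1)))
          = (F (i + 1) - F i) +
            Polynomial.C (-(-1 : B) ^ (r - i - 1) * (EE K m n i * HH K m n (r - i))) := by
      intro i hi
      have hiM : i < M := Finset.mem_range.mp hi
      have hir : i < r := lt_of_lt_of_le hiM (Nat.min_le_left r m)
      have h1 : r - (i + 1) = r - i - 1 := by omega
      have h2 : r - i - 1 + 1 = r - i := by omega
      have hH := aeval_g_hsymm_succ K m n hn (r - i - 1)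
      rw [h2] at hH
      have hXQ : Polynomial.X * Q (r - i - 1) = Q (r - i) - Polynomial.C (HH K m n (r - i)) := by
        simp only [hQdef]
        rw [hH]; ring
      have hsgn : ((-1 : Polynomial B)) ^ (r - i) = -(-1 : Polynomial B) ^ (r - i - 1) := by
        conv_lhs => rw [← h2, pow_succ]
        ring
      rw [aeval_g_esymm_succ K m n hm i, hFdef]
      simp only [h1, hsgn]
      rw [show (Polynomial.X * Polynomial.C (EE K m n i) + Polynomial.C (EE K m n (i + 1)))
            * Q (r - i - 1)
          = Polynomial.C (EE K m n i) * (Polynomial.X * Q (r - i - 1))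
            + Polynomial.C (EE K m n (i + 1)) * Q (r - i - 1) from by ring, hXQ]
      rw [map_mul, map_neg, map_pow, map_neg, map_one, map_mul]
      ring
    have ht0 : (-1 : Polynomial B) ^ (r - 0) *
        (aeval (gT K m n ∘ Sum.inl) (esymm (Fin m) K 0) * Q (r - 0)) = F 0 := by
      simp [hFdef, EE_zero]
    have key : substT K m n (cPoly K m n r)
        = F M + ∑ i ∈ range M,
            Polynomial.C (-(-1 : B) ^ (r - i - 1) * (EE K m n i * HH K m n (r - i))) := by
      rw [hsub, Finset.sum_range_succ', Finset.sum_congr rfl hstep, Finset.sum_add_distrib,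
        Finset.sum_range_sub F, ht0]
      ring
    rw [key, map_add, map_sum]
    simp only [Polynomial.derivative_C, Finset.sum_const_zero, add_zero]
    rcases le_or_gt r m with h | h
    · have hMr : M = r := min_eq_left h
      rw [hMr, hFdef]
      simp [hQ0]
    · have hMm : M = m := min_eq_right h.le
      rw [hMm, hFdef]
      simp [EE_card K m n hm]

end Main
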